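/- Θ'''(x) = (1−x)/(x²(1+x)³) is the third derivative of Θ(x) = 1 + x + x(1+2x)·log(1+1/x) − 3x − 1, and Θ''(x) ≥ 0 as well as Θ'(x) ≤ 0 for all x ≥ 1. -/

import Mathlib

noncomputable def Θ (x : ℝ) : ℝ := 1 + x + x*(1+2*x) * Real.log (1 + 1/x) - 3*x - 1

noncomputable def Θ1 (x : ℝ) : ℝ := -4 + 1/(1+x) + (1+4*x)*Real.log (1+1/x)

noncomputable def Θ2 (x : ℝ) : ℝ :=
  4*Real.log (1+1/x) - (1+4*x)/(x*(1+x)) - 1/(1+x)^2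

/-- derivative of `log (1 + 1/x)` -/
lemma hasDerivAt_L {x : ℝ} (hx : 0 < x) :
    HasDerivAt (fun y : ℝ => Real.log (1+1/y)) (-(x^2)⁻¹ / (1+1/x)) x := by
  have h1 : (0:ℝ) < 1 + 1/x := by positivity
  have hinv : HasDerivAt (fun y : ℝ => 1 + 1/y) (-(x^2)⁻¹) x := by
    simpa [one_div] using (hasDerivAt_inv (ne_of_gt hx)).const_add 1
  exact hinv.log (ne_of_gt h1)

lemma hasDerivAt_Θ {x : ℝ} (hx : 0 < x) : HasDerivAt Θ (Θ1 x) x := by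
  have hx0 : x ≠ 0 := ne_of_gt hx
  have hx1 : (1:ℝ) + x ≠ 0 := by positivity
  have hL := hasDerivAt_L hx
  have h1 : HasDerivAt (fun y : ℝ => y*(1+2*y)) (1*(1+2*x) + x*2) x := by
    simpa [Pi.mul_def] using (hasDerivAt_id x).mul (((hasDerivAt_id x).const_mul 2).const_add 1)
  have hprod := h1.mul hL
  have hfull := ((((hasDerivAt_id x).const_add 1).add hprod).sub
      ((hasDerivAt_id x).const_mul 3)).sub_const 1
  have heq : 1 + ((1*(1+2*x) + x*2) * Real.log (1+1/x)
      + x*(1+2*x) * (-(x^2)⁻¹ / (1+1/x))) - 3*1 = Θ1 x := by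
    have hden : (1:ℝ) + 1/x ≠ 0 := by positivity
    unfold Θ1
    field_simp
    ring
  rw [← heq]
  exact hfull

lemma hasDerivAt_Θ1 {x : ℝ} (hx : 0 < x) : HasDerivAt Θ1 (Θ2 x) x := by
  have hx0 : x ≠ 0 := ne_of_gt hx
  have hx1 : (1:ℝ) + x ≠ 0 := by positivity
  have hL := hasDerivAt_L hx
  have hinv : HasDerivAt (fun y : ℝ => 1/(1+y)) (-1/(1+x)^2) x := by
    simpa [one_div, Pi.inv_def] using ((hasDerivAt_id x).const_add 1).inv hx1
  have hmul : HasDerivAt (fun y : ℝ => (1+4*y)*Real.log (1+1/y))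
      (4 * Real.log (1+1/x) + (1+4*x) * (-(x^2)⁻¹ / (1+1/x))) x := by
    have h4 : HasDerivAt (fun y : ℝ => 1+4*y) 4 x := by
      simpa using ((hasDerivAt_id x).const_mul 4).const_add 1
    simpa [Pi.mul_def] using h4.mul hL
  have hfull := ((hasDerivAt_const x (-4:ℝ)).add hinv).add hmul
  have heq : (0:ℝ) + -1/(1+x)^2 + (4 * Real.log (1+1/x)
      + (1+4*x) * (-(x^2)⁻¹ / (1+1/x))) = Θ2 x := by
    have hden : (1:ℝ) + 1/x ≠ 0 := by positivity
    unfold Θ2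
    field_simp
    ring
  rw [← heq]
  exact hfull

lemma hasDerivAt_Θ2 {x : ℝ} (hx : 0 < x) :
    HasDerivAt Θ2 ((1-x)/(x^2*(1+x)^3)) x := by
  have hx0 : x ≠ 0 := ne_of_gt hx
  have hx1 : (1:ℝ) + x ≠ 0 := by positivity
  have hL := hasDerivAt_L hx
  have hA : HasDerivAt (fun y : ℝ => 4*Real.log (1+1/y))
      (4 * (-(x^2)⁻¹ / (1+1/x))) x := by
    simpa [mul_comm] using hL.const_mul 4
  have hnum : HasDerivAt (fun y : ℝ => 1+4*y) 4 x := by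
    simpa using ((hasDerivAt_id x).const_mul 4).const_add 1
  have hden : HasDerivAt (fun y : ℝ => y*(1+y)) (1*(1+x) + x*1) x := by
    simpa [Pi.mul_def] using (hasDerivAt_id x).mul ((hasDerivAt_id x).const_add 1)
  have hdne : x*(1+x) ≠ 0 := by positivity
  have hB : HasDerivAt (fun y : ℝ => (1+4*y)/(y*(1+y)))
      ((4*(x*(1+x)) - (1+4*x)*(1*(1+x)+x*1))/(x*(1+x))^2) x := hnum.div hden hdne
  have hpow : HasDerivAt (fun y : ℝ => (1+y)^2) (2*(1+x)) x := by
    have := ((hasDerivAt_id x).const_add 1).pow 2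
    simpa [Pi.pow_def] using this
  have hC : HasDerivAt (fun y : ℝ => 1/(1+y)^2) (-(2*(1+x))/((1+x)^2)^2) x := by
    have hp2 : ((1:ℝ)+x)^2 ≠ 0 := by positivity
    simpa [one_div, Pi.inv_def] using hpow.inv hp2
  have hfull := (hA.sub hB).sub hC
  have heq : 4 * (-(x^2)⁻¹ / (1+1/x))
      - (4*(x*(1+x)) - (1+4*x)*(1*(1+x)+x*1))/(x*(1+x))^2
      - (-(2*(1+x))/((1+x)^2)^2) = (1-x)/(x^2*(1+x)^3) := by
    have hd : (1:ℝ) + 1/x ≠ 0 := by positivity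
    field_simp
    ring
  rw [← heq]
  exact hfull

/-- upper bound: `log (1+t) ≤ t(t+6)/(4t+6)` for `t ≥ 0`. -/
lemma log_upper {t : ℝ} (ht : 0 ≤ t) : Real.log (1+t) ≤ t*(t+6)/(4*t+6) := by
  set f : ℝ → ℝ := fun t => Real.log (1+t) - t*(t+6)/(4*t+6) with hf
  have key : AntitoneOn f (Set.Ici 0) := by
    have hderiv : ∀ s ∈ Set.Ioi (0:ℝ), HasDerivAt f
        (1/(1+s) - ((1*(s+6)+s*1)*(4*s+6) - s*(s+6)*4)/(4*s+6)^2) s := by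
      intro s hs
      have hs0 : (0:ℝ) < s := hs
      have h1 : (0:ℝ) < 1+s := by linarith
      have h2 : (4:ℝ)*s+6 ≠ 0 := by positivity
      have hlog : HasDerivAt (fun y : ℝ => Real.log (1+y)) (1/(1+s)) s := by
        have := (((hasDerivAt_id s).const_add 1)).log (ne_of_gt h1)
        simpa [one_div] using this
      have hq : HasDerivAt (fun y : ℝ => y*(y+6)/(4*y+6))
          (((1*(s+6)+s*1)*(4*s+6) - s*(s+6)*4)/(4*s+6)^2) s := by
        have hn : HasDerivAt (fun y : ℝ => y*(y+6)) (1*(s+6)+s*1) s :=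
          (hasDerivAt_id s).mul ((hasDerivAt_id s).add_const 6)
        have hd : HasDerivAt (fun y : ℝ => 4*y+6) 4 s := by
          simpa using ((hasDerivAt_id s).const_mul 4).add_const 6
        exact hn.div hd h2
      exact hlog.sub hq
    apply antitoneOn_of_deriv_nonpos (convex_Ici 0)
    · apply ContinuousOn.sub
      · apply ContinuousOn.log (by fun_prop)
        intro s hs
        have : (0:ℝ) ≤ s := hs
        positivity
      · apply ContinuousOn.div (by fun_prop) (by fun_prop)
        intro s hs
        have : (0:ℝ) ≤ s := hs
        positivity
    · rw [interior_Ici]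
      intro s hs
      exact (hderiv s hs).differentiableAt.differentiableWithinAt
    · rw [interior_Ici]
      intro s hs
      rw [(hderiv s hs).deriv]
      have hs0 : (0:ℝ) < s := hs
      have h1 : (0:ℝ) < 1+s := by linarith
      have h2 : (0:ℝ) < 4*s+6 := by positivity
      rw [div_sub_div _ _ (ne_of_gt h1) (by positivity), div_nonpos_iff]
      right
      constructor
      · nlinarith [pow_pos hs0 3]
      · positivity
  have h0 : f t ≤ f 0 := key (Set.self_mem_Ici) ht ht
  simp only [hf] at h0
  norm_num at h0
  linarith

/-- lower bound: `t + 3t/(1+t) + t²/(1+t)² ≤ 4 log (1+t)` for `t ∈ [0,1]`. -/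
lemma log_lower {t : ℝ} (ht0 : 0 ≤ t) (ht1 : t ≤ 1) :
    t + 3*t/(1+t) + t^2/(1+t)^2 ≤ 4 * Real.log (1+t) := by
  set f : ℝ → ℝ := fun t => 4 * Real.log (1+t) - (t + 3*t/(1+t) + t^2/(1+t)^2)
    with hf
  have key : MonotoneOn f (Set.Icc 0 1) := by
    have hderiv : ∀ s : ℝ, 0 < s → HasDerivAt f
        (4 * (1/(1+s)) - (1 + (3*(1+s) - 3*s*1)/(1+s)^2
          + (2*s*(1+s)^2 - s^2*(2*(1+s)))/((1+s)^2)^2)) s := by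
      intro s hs0
      have h1 : (0:ℝ) < 1+s := by linarith
      have hlog : HasDerivAt (fun y : ℝ => Real.log (1+y)) (1/(1+s)) s := by
        have := (((hasDerivAt_id s).const_add 1)).log (ne_of_gt h1)
        simpa [one_div] using this
      have h1' : (1:ℝ)+s ≠ 0 := ne_of_gt h1
      have hd1 : HasDerivAt (fun y : ℝ => 1+y) 1 s := by
        simpa using (hasDerivAt_id s).const_add 1
      have hq1 : HasDerivAt (fun y : ℝ => 3*y/(1+y))
          ((3*(1+s) - 3*s*1)/(1+s)^2) s := by
        have hn : HasDerivAt (fun y : ℝ => 3*y) 3 s := by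
          simpa using (hasDerivAt_id s).const_mul 3
        simpa [Pi.div_def] using hn.div hd1 h1'
      have hpow : HasDerivAt (fun y : ℝ => (1+y)^2) (2*(1+s)) s := by
        have := ((hasDerivAt_id s).const_add 1).pow 2
        simpa [Pi.pow_def] using this
      have hsq : HasDerivAt (fun y : ℝ => y^2) (2*s) s := by
        simpa [Pi.pow_def] using (hasDerivAt_id s).pow 2
      have hq2 : HasDerivAt (fun y : ℝ => y^2/(1+y)^2)
          ((2*s*(1+s)^2 - s^2*(2*(1+s)))/((1+s)^2)^2) s := by
        have hp2 : ((1:ℝ)+s)^2 ≠ 0 := by positivity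
        exact hsq.div hpow hp2
      exact (hlog.const_mul 4).sub ((hasDerivAt_id s).add hq1 |>.add hq2)
    apply monotoneOn_of_deriv_nonneg (convex_Icc 0 1)
    · apply ContinuousOn.sub
      · apply ContinuousOn.mul (by fun_prop)
        apply ContinuousOn.log (by fun_prop)
        intro s hs
        have : (0:ℝ) ≤ s := hs.1
        positivity
      · apply ContinuousOn.add
        apply ContinuousOn.add (by fun_prop)
        · apply ContinuousOn.div (by fun_prop) (by fun_prop)
          intro s hs
          have : (0:ℝ) ≤ s := hs.1
          positivity
        · apply ContinuousOn.div (by fun_prop) (by fun_prop)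
          intro s hs
          have : (0:ℝ) ≤ s := hs.1
          positivity
    · rw [interior_Icc]
      intro s hs
      exact (hderiv s hs.1).differentiableAt.differentiableWithinAt
    · rw [interior_Icc]
      intro s hs
      rw [(hderiv s hs.1).deriv]
      have hs0 : (0:ℝ) < s := hs.1
      have hs1 : s < 1 := hs.2
      have h1 : (0:ℝ) < 1+s := by linarith
      have hkey : 4 * (1/(1+s)) - (1 + (3*(1+s) - 3*s*1)/(1+s)^2
          + (2*s*(1+s)^2 - s^2*(2*(1+s)))/((1+s)^2)^2)
          = s^2*(1-s)/(1+s)^3 := by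
        field_simp
        ring
      rw [hkey]
      apply div_nonneg (by nlinarith) (by positivity)
  have h0 : f 0 ≤ f t := key ⟨le_refl 0, by norm_num⟩ ⟨ht0, ht1⟩ ht0
  simp only [hf] at h0
  norm_num at h0
  linarith

theorem stmt12 : ∀ x : ℝ, 1 ≤ x →
    iteratedDeriv 3 Θ x = (1-x)/(x^2*(1+x)^3) ∧
    0 ≤ iteratedDeriv 2 Θ x ∧
    deriv Θ x ≤ 0 := by
  intro x hx
  have hx0 : (0:ℝ) < x := by linarith
  have hx0' : x ≠ 0 := ne_of_gt hx0
  have hx1 : (0:ℝ) < 1 + x := by linarith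
  have hx1' : (1:ℝ) + x ≠ 0 := ne_of_gt hx1
  -- derivatives as eventual equalities near x
  have hmem : ∀ᶠ y in nhds x, y ∈ Set.Ioi (0:ℝ) :=
    isOpen_Ioi.eventually_mem hx0
  have hd1 : deriv Θ =ᶠ[nhds x] Θ1 :=
    hmem.mono (fun y hy => (hasDerivAt_Θ hy).deriv)
  have hd2 : deriv (deriv Θ) =ᶠ[nhds x] Θ2 := by
    filter_upwards [eventually_eventually_nhds.mpr hd1, hmem] with y hy hy0
    rw [Filter.EventuallyEq.deriv_eq hy, (hasDerivAt_Θ1 hy0).deriv]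
  have h2eq : iteratedDeriv 2 Θ x = Θ2 x := by
    rw [show (2:ℕ) = 1 + 1 by rfl, iteratedDeriv_succ, iteratedDeriv_one]
    exact hd2.self_of_nhds
  have h3eq : iteratedDeriv 3 Θ x = (1-x)/(x^2*(1+x)^3) := by
    rw [show (3:ℕ) = 2 + 1 by rfl, iteratedDeriv_succ]
    have : iteratedDeriv 2 Θ =ᶠ[nhds x] Θ2 := by
      filter_upwards [eventually_eventually_nhds.mpr hd2] with y hy
      rw [show (2:ℕ) = 1 + 1 by rfl, iteratedDeriv_succ, iteratedDeriv_one]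
      exact hy.self_of_nhds
    rw [Filter.EventuallyEq.deriv_eq this, (hasDerivAt_Θ2 hx0).deriv]
  refine ⟨h3eq, ?_, ?_⟩
  · -- second derivative nonneg
    rw [h2eq]
    unfold Θ2
    have hlow := log_lower (t := 1/x) (by positivity) (by
      rw [div_le_one hx0]; exact hx)
    have hrw : (1/x) + 3*(1/x)/(1+1/x) + (1/x)^2/(1+1/x)^2
        = (1+4*x)/(x*(1+x)) + 1/(1+x)^2 := by
      have h : (1:ℝ) + 1/x ≠ 0 := by positivity
      field_simp
      ring
    rw [hrw] at hlow
    linarith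
  · -- first derivative nonpos
    rw [hd1.self_of_nhds]
    unfold Θ1
    have hup := log_upper (t := 1/x) (by positivity)
    have hrw : (1/x)*(1/x+6)/(4*(1/x)+6) = (1+6*x)/(x*(6*x+4)) := by
      field_simp
      ring
    rw [hrw] at hup
    have hpos : (0:ℝ) < 1 + 4*x := by linarith
    have hb : (1+4*x) * Real.log (1+1/x) ≤ (1+4*x) * ((1+6*x)/(x*(6*x+4))) :=
      mul_le_mul_of_nonneg_left hup (le_of_lt hpos)
    have hfin : (1+4*x) * ((1+6*x)/(x*(6*x+4))) ≤ 4 - 1/(1+x) := by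
      have hdiff : 4 - 1/(1+x) - (1+4*x) * ((1+6*x)/(x*(6*x+4)))
          = (x-1)/(x*(6*x+4)*(1+x)) := by
        field_simp
        ring
      have hnn : (0:ℝ) ≤ (x-1)/(x*(6*x+4)*(1+x)) :=
        div_nonneg (by linarith) (by positivity)
      linarith
    linarith
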